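/- If a student reports a monotonic transformation of her true preferences at her DA assignment (i.e., the set of schools she ranks above her assigned school weakly shrinks) and her DA assignment is unchanged, then the new DA matching weakly Pareto dominates the old one with respect to the true profile: every student who changes assignment strictly prefers her new assignment. -/

import Mathlib

/-- A preference profile: each student has a (strict) preference relation over
`Option S`, where `none` is the outside option `s₀` and `some s` is school `s`. -/
abbrev Profile (N S : Type*) := N → Option S → Option S → Prop

/-- A school choice context: strict priorities and capacities for each school. -/
structure SchoolContext (N S : Type*) where
  prio : S → N → N → Prop
  prio_sto : ∀ s, IsStrictTotalOrder N (prio s)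
  cap : S → ℕ
  cap_pos : ∀ s, 1 ≤ cap s

/-- Well-formedness of a profile: each student's preference is a strict linear order. -/
def ProfWF {N S : Type*} (P : Profile N S) : Prop :=
  ∀ i, IsStrictTotalOrder (Option S) (P i)

/-- Feasibility of an assignment: capacities are respected. -/
def Feasible {N S : Type*} (C : SchoolContext N S) (μ : N → Option S) : Prop :=
  ∀ s : S, {i | μ i = some s}.ncard ≤ C.cap s

/-- Individual rationality: no student prefers the outside option to her assignment. -/
def IndRat {N S : Type*} (P : Profile N S) (μ : N → Option S) : Prop :=
  ∀ i, ¬ P i none (μ i)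

/-- Non-wastefulness: no student prefers a school with an unfilled seat. -/
def NonWasteful {N S : Type*} (C : SchoolContext N S) (P : Profile N S)
    (μ : N → Option S) : Prop :=
  ∀ i (s : S), P i (some s) (μ i) → C.cap s ≤ {j | μ j = some s}.ncard

/-- No justified envy. -/
def NoJustifiedEnvy {N S : Type*} (C : SchoolContext N S) (P : Profile N S)
    (μ : N → Option S) : Prop :=
  ∀ i j (s : S), P i (some s) (μ i) → μ j = some s → ¬ C.prio s i j

/-- Stability of a matching. -/
def IsStable {N S : Type*} (C : SchoolContext N S) (P : Profile N S)
    (μ : N → Option S) : Prop :=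
  Feasible C μ ∧ IndRat P μ ∧ NonWasteful C P μ ∧ NoJustifiedEnvy C P μ

/-- If a student reports a monotonic transformation of her true preferences at her DA
assignment and her DA assignment is unchanged, then the new DA matching weakly Pareto
dominates the old one under the true profile: every student whose assignment changes
strictly prefers her new assignment. -/
theorem stmt5 {N S : Type*} [Finite N] [DecidableEq N] (C : SchoolContext N S)
    (DA : Profile N S → (N → Option S))
    (hDAstable : ∀ P, ProfWF P → IsStable C P (DA P))
    (hDAopt : ∀ P, ProfWF P → ∀ μ, IsStable C P μ → ∀ i, ¬ P i (μ i) (DA P i))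
    (i : N) (P : Profile N S) (P'i : Option S → Option S → Prop)
    (hP : ProfWF P) (hP' : ProfWF (Function.update P i P'i))
    (hmono : ∀ s : S, P'i (some s) (DA P i) → P i (some s) (DA P i))
    (hsame : DA (Function.update P i P'i) i = DA P i) :
    ∀ j, DA (Function.update P i P'i) j ≠ DA P j →
      P j (DA (Function.update P i P'i) j) (DA P j) := by
  set P' := Function.update P i P'i with hP'def
  set μ := DA P with hμdef
  set μ' := DA P' with hμ'def
  obtain ⟨hF, hIR, hNW, hNJE⟩ := hDAstable P hP
  obtain ⟨hF', hIR', hNW', hNJE'⟩ := hDAstable P' hP'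
  -- μ is stable under P'
  have hstab : IsStable C P' μ := by
    refine ⟨hF, ?_, ?_, ?_⟩
    · intro j
      by_cases hji : j = i
      · subst hji
        have : P' j = P'i := Function.update_self j P'i P
        rw [this]
        have h2 := hIR' j
        rw [show P' j = P'i from Function.update_self j P'i P,
          show DA P' j = μ j from hsame] at h2
        exact h2
      · rw [show P' j = P j from Function.update_of_ne hji P'i P]
        exact hIR j
    · intro j s hjs
      by_cases hji : j = i
      · subst hji
        rw [show P' j = P'i from Function.update_self j P'i P] at hjs
        exact hNW j s (hmono s hjs)
      · rw [show P' j = P j from Function.update_of_ne hji P'i P] at hjs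
        exact hNW j s hjs
    · intro j k s hjs hks
      by_cases hji : j = i
      · subst hji
        rw [show P' j = P'i from Function.update_self j P'i P] at hjs
        exact hNJE j k s (hmono s hjs) hks
      · rw [show P' j = P j from Function.update_of_ne hji P'i P] at hjs
        exact hNJE j k s hjs hks
  have hopt := hDAopt P' hP' μ hstab
  intro j hne
  have hji : j ≠ i := by
    intro h; subst h; exact hne hsame
  have hPj : P' j = P j := Function.update_of_ne hji P'i P
  have hnot : ¬ P j (μ j) (μ' j) := by
    have := hopt j; rwa [hPj] at this
  by_contra hc
  exact hne ((hP j).trichotomous (μ' j) (μ j) hc hnot)
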